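/- Let A be a finite-dimensional K-algebra, P a finite-dimensional projective left A-module, L a completely reducible finite-dimensional A-module, and r ≥ 1 an integer. Then the connecting homomorphism Hom_A(rad^{r-1}P/rad^r P, L) → Ext^1_A(P/rad^{r-1}P, L) arising from the short exact sequence 0 → rad^{r-1}P/rad^r P → P/rad^r P → P/rad^{r-1}P → 0 is surjective. -/

import Mathlib

/-- `radPow A M n = rad^n M = (rad A)^n • M`, the `n`-th radical submodule of an `A`-module `M`,
where `rad A` is the Jacobson radical of `A`. -/
def radPow (A : Type*) [Ring A] (M : Type*) [AddCommGroup M] [Module A M] :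
    ℕ → Submodule A M
  | 0 => ⊤
  | n + 1 => Submodule.span A
      {z : M | ∃ x ∈ Ideal.jacobson (⊥ : Ideal A), ∃ m ∈ radPow A M n, x • m = z}

/-- The Jacobson radical annihilates semisimple modules. -/
theorem jacobson_smul_eq_zero {A : Type*} [Ring A]
    {L : Type*} [AddCommGroup L] [Module A L] [IsSemisimpleModule A L]
    {x : A} (hx : x ∈ Ideal.jacobson (⊥ : Ideal A)) (l : L) : x • l = 0 := by
  have hl : l ∈ sSup { m : Submodule A L | IsSimpleModule A m } := by
    rw [IsSemisimpleModule.sSup_simples_eq_top]; trivial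
  rw [sSup_eq_iSup'] at hl
  refine Submodule.iSup_induction (motive := fun y ↦ x • y = 0) _ hl (fun S s hs ↦ ?_) (smul_zero x)
    (fun a b ha hb ↦ by show x • (a + b) = 0; rw [smul_add, ha, hb, add_zero])
  -- S : {m : Submodule A L // IsSimpleModule A m}, s ∈ S.1
  haveI : IsSimpleModule A S.1 := S.2
  rcases eq_or_ne (⟨s, hs⟩ : S.1) 0 with h0 | h0
  · have : s = 0 := by simpa using congrArg Subtype.val h0
    show x • s = 0; rw [this, smul_zero]
  · have hker : x ∈ LinearMap.ker (LinearMap.toSpanSingleton A ↥S.1 (⟨s, hs⟩ : ↥S.1)) := by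
      have hmax := IsSimpleModule.ker_toSpanSingleton_isMaximal A h0
      have hJle : Ideal.jacobson (⊥ : Ideal A) ≤
          LinearMap.ker (LinearMap.toSpanSingleton A ↥S.1 (⟨s, hs⟩ : ↥S.1)) :=
        sInf_le ⟨bot_le, hmax⟩
      exact hJle hx
    have := (LinearMap.mem_ker.mp hker)
    have : x • (⟨s, hs⟩ : S.1) = 0 := this
    simpa using congrArg Subtype.val this

/-- For a finite-dimensional `K`-algebra `A`, a finite-dimensional projective `A`-module `P`,
a completely reducible finite-dimensional `A`-module `L` and `r ≥ 1`, the connecting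
homomorphism `Hom_A(rad^{r-1}P/rad^r P, L) → Ext¹_A(P/rad^{r-1}P, L)` arising from the short
exact sequence `0 → rad^{r-1}P/rad^r P → P/rad^r P → P/rad^{r-1}P → 0` is surjective.
Equivalently (by the pushout description of the connecting map): for every extension
`0 → L → E →π P/rad^{r-1}P → 0` there exists `h : P/rad^r P →ₗ[A] E` lifting the canonical
projection `P/rad^r P → P/rad^{r-1}P` through `π`. -/
theorem connecting_hom_surjective
    {K : Type*} [Field K] {A : Type*} [Ring A] [Algebra K A] [FiniteDimensional K A]
    (P : Type*) [AddCommGroup P] [Module A P] [Module K P] [IsScalarTower K A P]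
    [FiniteDimensional K P] [Module.Projective A P]
    (L : Type*) [AddCommGroup L] [Module A L] [Module K L] [IsScalarTower K A L]
    [FiniteDimensional K L] [IsSemisimpleModule A L]
    (r : ℕ) (hr : 1 ≤ r)
    (E : Type*) [AddCommGroup E] [Module A E]
    (ι : L →ₗ[A] E) (π : E →ₗ[A] (P ⧸ radPow A P (r - 1)))
    (hinj : Function.Injective ι) (hsurj : Function.Surjective π)
    (hexact : LinearMap.range ι = LinearMap.ker π) :
    ∃ h : (P ⧸ radPow A P r) →ₗ[A] E,
      ∀ x : P, π (h (Submodule.Quotient.mk x)) =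
        (Submodule.Quotient.mk x : P ⧸ radPow A P (r - 1)) := by
  obtain ⟨r', rfl⟩ : ∃ r', r = r' + 1 := ⟨r - 1, (Nat.succ_pred_eq_of_pos hr).symm⟩
  -- lift the quotient projection through π using projectivity of P
  obtain ⟨g, hg⟩ := Module.projective_lifting_property π ((radPow A P r').mkQ) hsurj
  have hgx : ∀ x : P, π (g x) = Submodule.Quotient.mk x := fun x ↦
    congrFun (congrArg DFunLike.coe hg) x
  -- g kills rad^{r'+1} P
  have hle : radPow A P (r' + 1) ≤ LinearMap.ker g := by
    show Submodule.span A _ ≤ _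
    rw [Submodule.span_le]
    rintro _ ⟨x, hx, m, hm, rfl⟩
    have hπgm : π (g m) = 0 := by
      rw [hgx m, ← Submodule.mkQ_apply, Submodule.mkQ_apply,
        Submodule.Quotient.mk_eq_zero]
      exact hm
    have : g m ∈ LinearMap.range ι := hexact ▸ LinearMap.mem_ker.mpr hπgm
    obtain ⟨l, hl⟩ := this
    have : g (x • m) = ι (x • l) := by rw [map_smul, map_smul, hl]
    rw [SetLike.mem_coe, LinearMap.mem_ker, this, jacobson_smul_eq_zero hx l, map_zero]
  refine ⟨(radPow A P (r' + 1)).liftQ g hle, fun x ↦ ?_⟩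
  exact hgx x
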